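/- Let Γ be a real symmetric (2n+4)×(2n+4) matrix of the form V + Vᵀ where V is the Seifert matrix Vₙ described below. Then the signature of Γ equals 2n. -/

import Mathlib

/-- Entry function (0-indexed) of the Seifert matrix Vₙ of size (2n+4)×(2n+4):
V[0,0] = -2, V[0,2] = -1, V[1,0] = -1, V[1,1] = -1, V[2,1] = 1, V[2,3] = -1,
and for i ≥ 3: V[i,i] = 1 and V[i,i+1] = -1 (within bounds). -/
def Vent (i j : ℕ) : ℝ :=
  if i = 0 ∧ j = 0 then -2
  else if i = 0 ∧ j = 2 then -1
  else if i = 1 ∧ j = 0 then -1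
  else if i = 1 ∧ j = 1 then -1
  else if i = 2 ∧ j = 1 then 1
  else if i = 2 ∧ j = 3 then -1
  else if 3 ≤ i ∧ j = i then 1
  else if 3 ≤ i ∧ j = i + 1 then -1
  else 0

/-- The Seifert matrix Vₙ, of size (2n+4) × (2n+4). -/
def Vmat (n : ℕ) : Matrix (Fin (2 * n + 4)) (Fin (2 * n + 4)) ℝ :=
  fun i j => Vent i j

/-- The signature of a real square matrix: number of positive eigenvalues minus
number of negative eigenvalues, counted with multiplicity as roots of the
characteristic polynomial. -/
noncomputable def matSig {m : ℕ} (A : Matrix (Fin m) (Fin m) ℝ) : ℤ :=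
  (A.charpoly.roots.countP (fun x => 0 < x) : ℤ) -
    (A.charpoly.roots.countP (fun x => x < 0) : ℤ)

open Matrix Polynomial Finset

section General

variable {m : ℕ}

lemma star_real (U : Matrix (Fin m) (Fin m) ℝ) : star U = U.transpose := by
  ext i j; simp [Matrix.star_apply]

lemma charpoly_conj (A D U V : Matrix (Fin m) (Fin m) ℝ)
    (hUV : U * V = 1) (hVU : V * U = 1) (hA : A = U * D * V) :
    A.charpoly = D.charpoly := by
  have hc : charmatrix A = U.map C * charmatrix D * V.map C := by
    rw [charmatrix, charmatrix, hA]
    simp only [RingHom.mapMatrix_apply]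
    have h1 : (U * D * V).map (C : ℝ →+* ℝ[X]) = U.map C * D.map C * V.map C := by
      rw [Matrix.map_mul, Matrix.map_mul]
    have h2 : U.map (C : ℝ →+* ℝ[X]) * Matrix.scalar (Fin m) (X : ℝ[X]) * V.map C
        = Matrix.scalar (Fin m) (X : ℝ[X]) := by
      rw [(Matrix.scalar_commute (X : ℝ[X]) (fun r => Commute.all _ _) (U.map C)).symm.eq]
      rw [mul_assoc, ← Matrix.map_mul, hUV]
      simp
    rw [mul_sub, sub_mul, h1, h2]
  have hdet : det (U.map (C : ℝ →+* ℝ[X]) * V.map C) = 1 := by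
    rw [← Matrix.map_mul, hUV]; simp
  have hdet2 : det (V.map (C : ℝ →+* ℝ[X]) * U.map C) = 1 := by
    rw [← Matrix.map_mul, hVU]; simp
  rw [Matrix.charpoly, Matrix.charpoly, hc, det_mul, det_mul, mul_comm, ← mul_assoc, ← det_mul,
    hdet2, one_mul]

lemma charpoly_diag (d : Fin m → ℝ) :
    (Matrix.diagonal d).charpoly = ∏ i, (X - C (d i)) := by
  have : charmatrix (Matrix.diagonal d) = Matrix.diagonal (fun i => X - C (d i)) := by
    ext i j
    rcases eq_or_ne i j with h | h
    · subst h; rw [charmatrix_apply_eq, Matrix.diagonal_apply_eq, Matrix.diagonal_apply_eq]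
    · rw [charmatrix_apply_ne _ _ _ h, Matrix.diagonal_apply_ne _ h, Matrix.diagonal_apply_ne _ h,
        map_zero, neg_zero]
  rw [Matrix.charpoly, this, Matrix.det_diagonal]

lemma charpoly_herm {A : Matrix (Fin m) (Fin m) ℝ} (hA : A.IsHermitian) :
    A.charpoly = ∏ i, (X - C (hA.eigenvalues i)) := by
  have hd : (RCLike.ofReal ∘ hA.eigenvalues : Fin m → ℝ) = hA.eigenvalues := by
    funext i; simp
  rw [charpoly_conj A (Matrix.diagonal hA.eigenvalues)
    (hA.eigenvectorUnitary : Matrix (Fin m) (Fin m) ℝ)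
    (star (hA.eigenvectorUnitary : Matrix (Fin m) (Fin m) ℝ))
    (by simpa using (Matrix.mem_unitaryGroup_iff'.mp hA.eigenvectorUnitary.2))
    (by simpa using (Matrix.mem_unitaryGroup_iff.mp hA.eigenvectorUnitary.2))
    (by conv_lhs => rw [hA.spectral_theorem, Unitary.conjStarAlgAut_apply, hd]), charpoly_diag]

lemma roots_herm {A : Matrix (Fin m) (Fin m) ℝ} (hA : A.IsHermitian) :
    A.charpoly.roots = Finset.univ.val.map hA.eigenvalues := by
  rw [charpoly_herm hA, Finset.prod_eq_multiset_prod,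
    show (fun i => X - C (hA.eigenvalues i)) = (fun a => X - C a) ∘ hA.eigenvalues from rfl,
    ← Multiset.map_map]
  exact roots_multiset_prod_X_sub_C _


variable {m k : ℕ}

lemma quad_formula {A : Matrix (Fin m) (Fin m) ℝ} (hA : A.IsHermitian) (y : Fin m → ℝ) :
    y ⬝ᵥ (A *ᵥ y) = ∑ i, hA.eigenvalues i * ((hA.eigenvectorBasis i : Fin m → ℝ) ⬝ᵥ y) ^ 2 := by
  set U : Matrix (Fin m) (Fin m) ℝ := (hA.eigenvectorUnitary : Matrix (Fin m) (Fin m) ℝ) with hU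
  have hd : (RCLike.ofReal ∘ hA.eigenvalues : Fin m → ℝ) = hA.eigenvalues := by
    funext i; simp
  have hspec : A = U * Matrix.diagonal hA.eigenvalues * star U := by
    conv_lhs => rw [hA.spectral_theorem, Unitary.conjStarAlgAut_apply, hd]
  have hw : ∀ i, (star U *ᵥ y) i = (hA.eigenvectorBasis i : Fin m → ℝ) ⬝ᵥ y := by
    intro i
    simp only [Matrix.mulVec, dotProduct, Matrix.star_apply, hU,
      Matrix.IsHermitian.eigenvectorUnitary_apply]
    simp [mul_comm]
  calc y ⬝ᵥ (A *ᵥ y) = y ⬝ᵥ (U *ᵥ (Matrix.diagonal hA.eigenvalues *ᵥ (star U *ᵥ y))) := by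
        conv_lhs => rw [hspec]
        simp only [← Matrix.mulVec_mulVec]
    _ = (star U *ᵥ y) ⬝ᵥ (Matrix.diagonal hA.eigenvalues *ᵥ (star U *ᵥ y)) := by
        rw [Matrix.dotProduct_mulVec y U, ← Matrix.mulVec_transpose]
        have : Uᵀ = star U := by
          ext i j
          simp [Matrix.star_apply]
        rw [this]
    _ = ∑ i, hA.eigenvalues i * ((hA.eigenvectorBasis i : Fin m → ℝ) ⬝ᵥ y) ^ 2 := by
        rw [dotProduct]
        refine Finset.sum_congr rfl fun i _ => ?_
        rw [Matrix.mulVec_diagonal, hw i]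
        ring

lemma count_neg_le {A : Matrix (Fin m) (Fin m) ℝ} (hA : A.IsHermitian)
    (T : (Fin k → ℝ) →ₗ[ℝ] (Fin m → ℝ))
    (hT : ∀ c, c ≠ 0 → (T c) ⬝ᵥ (A *ᵥ (T c)) < 0) :
    k ≤ (Finset.univ.filter fun i => hA.eigenvalues i < 0).card := by
  set S := Finset.univ.filter fun i => hA.eigenvalues i < 0 with hS
  by_contra hlt
  push_neg at hlt
  let L : (Fin k → ℝ) →ₗ[ℝ] ({ i // i ∈ S } → ℝ) :=
    { toFun := fun c i => (hA.eigenvectorBasis i.1 : Fin m → ℝ) ⬝ᵥ T c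
      map_add' := by intro a b; funext i; simp [dotProduct_add]
      map_smul' := by intro r a; funext i; simp [dotProduct_smul] }
  have hker : LinearMap.ker L ≠ ⊥ := by
    apply LinearMap.ker_ne_bot_of_finrank_lt
    rw [Module.finrank_pi, Module.finrank_pi]
    simpa using hlt
  obtain ⟨c, hc0, hcne⟩ := Submodule.ne_bot_iff _ |>.mp hker
  have hQ : (0:ℝ) ≤ (T c) ⬝ᵥ (A *ᵥ (T c)) := by
    rw [quad_formula hA]
    apply Finset.sum_nonneg
    intro i _
    by_cases hi : i ∈ S
    · have : (hA.eigenvectorBasis i : Fin m → ℝ) ⬝ᵥ T c = 0 := congrFun hc0 ⟨i, hi⟩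
      rw [this]; simp
    · have : 0 ≤ hA.eigenvalues i := by
        simp only [hS, Finset.mem_filter, Finset.mem_univ, true_and] at hi
        linarith [not_lt.mp hi]
      positivity
  exact absurd (hT c hcne) (not_lt.mpr hQ)

lemma count_pos_le {A : Matrix (Fin m) (Fin m) ℝ} (hA : A.IsHermitian)
    (T : (Fin k → ℝ) →ₗ[ℝ] (Fin m → ℝ))
    (hT : ∀ c, c ≠ 0 → 0 < (T c) ⬝ᵥ (A *ᵥ (T c))) :
    k ≤ (Finset.univ.filter fun i => 0 < hA.eigenvalues i).card := by
  set S := Finset.univ.filter fun i => 0 < hA.eigenvalues i with hS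
  by_contra hlt
  push_neg at hlt
  let L : (Fin k → ℝ) →ₗ[ℝ] ({ i // i ∈ S } → ℝ) :=
    { toFun := fun c i => (hA.eigenvectorBasis i.1 : Fin m → ℝ) ⬝ᵥ T c
      map_add' := by intro a b; funext i; simp [dotProduct_add]
      map_smul' := by intro r a; funext i; simp [dotProduct_smul] }
  have hker : LinearMap.ker L ≠ ⊥ := by
    apply LinearMap.ker_ne_bot_of_finrank_lt
    rw [Module.finrank_pi, Module.finrank_pi]
    simpa using hlt
  obtain ⟨c, hc0, hcne⟩ := Submodule.ne_bot_iff _ |>.mp hker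
  have hQ : (T c) ⬝ᵥ (A *ᵥ (T c)) ≤ 0 := by
    rw [quad_formula hA]
    apply Finset.sum_nonpos
    intro i _
    by_cases hi : i ∈ S
    · have : (hA.eigenvectorBasis i : Fin m → ℝ) ⬝ᵥ T c = 0 := congrFun hc0 ⟨i, hi⟩
      rw [this]; simp
    · have h1 : hA.eigenvalues i ≤ 0 := by
        simp only [hS, Finset.mem_filter, Finset.mem_univ, true_and] at hi
        linarith [not_lt.mp hi]
      have h2 : (0:ℝ) ≤ ((hA.eigenvectorBasis i : Fin m → ℝ) ⬝ᵥ T c) ^ 2 := sq_nonneg _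
      exact mul_nonpos_of_nonpos_of_nonneg h1 h2
  exact absurd (hT c hcne) (not_lt.mpr hQ)

lemma sum_pair' (g : ℕ → ℝ) {a b N : ℕ} (hab : a < b) (hbN : b < N)
    (h0 : ∀ j, j < N → j ≠ a → j ≠ b → g j = 0) :
    ∑ j ∈ Finset.range N, g j = g a + g b := by
  have hsub : ({a, b} : Finset ℕ) ⊆ Finset.range N := by
    intro x hx
    simp only [Finset.mem_insert, Finset.mem_singleton] at hx
    rcases hx with rfl | rfl <;> simp [Finset.mem_range] <;> omega
  rw [← Finset.sum_subset hsub]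
  · exact Finset.sum_pair hab.ne
  · intro x hx hx2
    simp only [Finset.mem_insert, Finset.mem_singleton, not_or] at hx2
    exact h0 x (Finset.mem_range.mp hx) hx2.1 hx2.2

lemma vent00 : Vent 0 0 = -2 := by simp [Vent]
lemma vent02 : Vent 0 2 = -1 := by simp [Vent]
lemma vent10 : Vent 1 0 = -1 := by simp [Vent]
lemma vent11 : Vent 1 1 = -1 := by simp [Vent]
lemma vent21 : Vent 2 1 = 1 := by simp [Vent]
lemma vent23 : Vent 2 3 = -1 := by simp [Vent]
lemma ventii {i : ℕ} (h : 3 ≤ i) : Vent i i = 1 := by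
  unfold Vent; split_ifs <;> first | rfl | (exfalso; omega) | (exfalso; tauto)
lemma ventis {i : ℕ} (h : 3 ≤ i) : Vent i (i+1) = -1 := by
  unfold Vent; split_ifs <;> first | rfl | (exfalso; omega) | (exfalso; tauto)
lemma vent0z (j : ℕ) (h1 : j ≠ 0) (h2 : j ≠ 2) : Vent 0 j = 0 := by
  unfold Vent; split_ifs <;> first | rfl | (exfalso; omega) | (exfalso; tauto)
lemma vent1z (j : ℕ) (h1 : j ≠ 0) (h2 : j ≠ 1) : Vent 1 j = 0 := by
  unfold Vent; split_ifs <;> first | rfl | (exfalso; omega) | (exfalso; tauto)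
lemma vent2z (j : ℕ) (h1 : j ≠ 1) (h2 : j ≠ 3) : Vent 2 j = 0 := by
  unfold Vent; split_ifs <;> first | rfl | (exfalso; omega) | (exfalso; tauto)
lemma ventiz {i : ℕ} (hi : 3 ≤ i) (j : ℕ) (h1 : j ≠ i) (h2 : j ≠ i+1) : Vent i j = 0 := by
  unfold Vent; split_ifs <;> first | rfl | (exfalso; omega) | (exfalso; tauto)

lemma row0 {N : ℕ} (h : 2 < N) (z : ℕ → ℝ) :
    ∑ j ∈ Finset.range N, Vent 0 j * z j = -2 * z 0 - z 2 := by
  rw [sum_pair' (fun j => Vent 0 j * z j) (show (0:ℕ) < 2 by omega) h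
    (fun j _ h1 h2 => by show Vent 0 j * z j = 0; rw [vent0z j h1 h2, zero_mul])]
  show Vent 0 0 * z 0 + Vent 0 2 * z 2 = _
  rw [vent00, vent02]; ring

lemma row1 {N : ℕ} (h : 1 < N) (z : ℕ → ℝ) :
    ∑ j ∈ Finset.range N, Vent 1 j * z j = -(z 0) - z 1 := by
  rw [sum_pair' (fun j => Vent 1 j * z j) (show (0:ℕ) < 1 by omega) h
    (fun j _ h1 h2 => by show Vent 1 j * z j = 0; rw [vent1z j h1 h2, zero_mul])]
  show Vent 1 0 * z 0 + Vent 1 1 * z 1 = _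
  rw [vent10, vent11]; ring

lemma row2 {N : ℕ} (h : 3 < N) (z : ℕ → ℝ) :
    ∑ j ∈ Finset.range N, Vent 2 j * z j = z 1 - z 3 := by
  rw [sum_pair' (fun j => Vent 2 j * z j) (show (1:ℕ) < 3 by omega) h
    (fun j _ h1 h2 => by show Vent 2 j * z j = 0; rw [vent2z j h1 h2, zero_mul])]
  show Vent 2 1 * z 1 + Vent 2 3 * z 3 = _
  rw [vent21, vent23]; ring

lemma rowi {N i : ℕ} (hi : 3 ≤ i) (h : i + 1 < N) (z : ℕ → ℝ) :
    ∑ j ∈ Finset.range N, Vent i j * z j = z i - z (i+1) := by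
  rw [sum_pair' (fun j => Vent i j * z j) (show i < i + 1 by omega) h
    (fun j _ h1 h2 => by show Vent i j * z j = 0; rw [ventiz hi j h1 h2, zero_mul])]
  show Vent i i * z i + Vent i (i+1) * z (i+1) = _
  rw [ventii hi, ventis hi]; ring

lemma split3 (m : ℕ) (hm : 3 ≤ m) (F : ℕ → ℝ) :
    ∑ i ∈ Finset.range m, F i = F 0 + F 1 + F 2 + ∑ i ∈ Finset.Ico 3 m, F i := by
  rw [Finset.range_eq_Ico, Finset.sum_eq_sum_Ico_succ_bot (by omega),
      Finset.sum_eq_sum_Ico_succ_bot (by omega), Finset.sum_eq_sum_Ico_succ_bot (by omega)]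
  norm_num
  ring

lemma quadQ (n : ℕ) (z : ℕ → ℝ) (hz : ∀ j, 2*n+4 ≤ j → z j = 0) :
    dotProduct (fun i : Fin (2*n+4) => z ↑i)
      ((Vmat n + (Vmat n)ᵀ) *ᵥ (fun i : Fin (2*n+4) => z ↑i))
    = 2 * (z 0 * (-2*z 0 - z 2) + z 1 * (-(z 0) - z 1) + z 2 * (z 1 - z 3)
      + ∑ i ∈ Finset.Ico 3 (2*n+4), z i * (z i - z (i+1))) := by
  have hmv : ∀ i : Fin (2*n+4),
      ((Vmat n + (Vmat n)ᵀ) *ᵥ (fun k : Fin (2*n+4) => z ↑k)) i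
      = ∑ j ∈ Finset.range (2*n+4), (Vent ↑i j + Vent j ↑i) * z j := by
    intro i
    show ∑ j : Fin (2*n+4), (Vmat n + (Vmat n)ᵀ) i j * z ↑j = _
    rw [← Fin.sum_univ_eq_sum_range (fun j => (Vent ↑i j + Vent j ↑i) * z j) (2*n+4)]
    refine Finset.sum_congr rfl fun j _ => ?_
    simp [Vmat, Matrix.add_apply, Matrix.transpose_apply]
  have key : dotProduct (fun i : Fin (2*n+4) => z ↑i)
      ((Vmat n + (Vmat n)ᵀ) *ᵥ (fun i : Fin (2*n+4) => z ↑i))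
      = ∑ i ∈ Finset.range (2*n+4), z i *
          ∑ j ∈ Finset.range (2*n+4), (Vent i j + Vent j i) * z j := by
    show ∑ i : Fin (2*n+4), z ↑i *
        ((Vmat n + (Vmat n)ᵀ) *ᵥ (fun k : Fin (2*n+4) => z ↑k)) i = _
    simp only [hmv]
    exact Fin.sum_univ_eq_sum_range
      (fun i => z i * ∑ j ∈ Finset.range (2*n+4), (Vent i j + Vent j i) * z j) (2*n+4)
  have swap : ∑ i ∈ Finset.range (2*n+4), z i *
        ∑ j ∈ Finset.range (2*n+4), (Vent i j + Vent j i) * z j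
      = 2 * ∑ i ∈ Finset.range (2*n+4), z i *
          ∑ j ∈ Finset.range (2*n+4), Vent i j * z j := by
    have e1 : ∀ i ∈ Finset.range (2*n+4), z i *
        ∑ j ∈ Finset.range (2*n+4), (Vent i j + Vent j i) * z j
        = (∑ j ∈ Finset.range (2*n+4), Vent i j * z i * z j)
          + ∑ j ∈ Finset.range (2*n+4), Vent j i * z i * z j := by
      intro i _
      rw [Finset.mul_sum, ← Finset.sum_add_distrib]
      exact Finset.sum_congr rfl fun j _ => by ring
    rw [Finset.sum_congr rfl e1, Finset.sum_add_distrib]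
    rw [Finset.sum_comm (s := Finset.range (2*n+4)) (t := Finset.range (2*n+4))
      (f := fun i j => Vent j i * z i * z j)]
    have e2 : ∑ j ∈ Finset.range (2*n+4), ∑ i ∈ Finset.range (2*n+4), Vent j i * z i * z j
        = ∑ i ∈ Finset.range (2*n+4), ∑ j ∈ Finset.range (2*n+4), Vent i j * z i * z j :=
      Finset.sum_congr rfl fun i _ => Finset.sum_congr rfl fun j _ => by ring
    rw [e2]
    have e3 : (∑ i ∈ Finset.range (2*n+4), ∑ j ∈ Finset.range (2*n+4), Vent i j * z i * z j)
        = ∑ i ∈ Finset.range (2*n+4), z i * ∑ j ∈ Finset.range (2*n+4), Vent i j * z j :=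
      Finset.sum_congr rfl fun i _ => by
        rw [Finset.mul_sum]; exact Finset.sum_congr rfl fun j _ => by ring
    rw [e3]; ring
  rw [key, swap]
  have hinner : ∀ i : ℕ, ∑ j ∈ Finset.range (2*n+4), Vent i j * z j
      = ∑ j ∈ Finset.range (2*n+5), Vent i j * z j := by
    intro i
    have h := Finset.sum_range_succ (fun j => Vent i j * z j) (2*n+4)
    simp only [hz (2*n+4) le_rfl, mul_zero, add_zero] at h
    rw [show 2*n+5 = 2*n+4+1 by omega]
    exact h.symm
  simp only [hinner]
  rw [split3 (2*n+4) (by omega) (fun i => z i * ∑ j ∈ Finset.range (2*n+5), Vent i j * z j)]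
  simp only [row0 (show 2 < 2*n+5 by omega) z, row1 (show 1 < 2*n+5 by omega) z,
    row2 (show 3 < 2*n+5 by omega) z]
  rw [Finset.sum_congr rfl (fun i hi => by
    rw [rowi (Finset.mem_Ico.mp hi).1
      (show i + 1 < 2*n+5 by have := (Finset.mem_Ico.mp hi).2; omega) z])]


def cext {k : ℕ} (c : Fin k → ℝ) : ℕ → ℝ := fun j => if h : j < k then c ⟨j, h⟩ else 0

lemma cext_add {k : ℕ} (c d : Fin k → ℝ) : cext (c + d) = cext c + cext d := by
  funext j; simp only [cext, Pi.add_apply]; split <;> simp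

lemma cext_smul {k : ℕ} (r : ℝ) (c : Fin k → ℝ) : cext (r • c) = r • cext c := by
  funext j; simp only [cext, Pi.smul_apply, smul_eq_mul]; split <;> simp

lemma cext_zero_of_le {k : ℕ} (c : Fin k → ℝ) {j : ℕ} (h : k ≤ j) : cext c j = 0 := by
  simp only [cext]; rw [dif_neg (by omega)]

/-- the function underlying the negative-definite subspace -/
def negfun (c : Fin 2 → ℝ) : ℕ → ℝ := fun i =>
  if i = 0 then c 0 else if i = 1 then c 1 else 0

def Tneg (n : ℕ) : (Fin 2 → ℝ) →ₗ[ℝ] (Fin (2*n+4) → ℝ) where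
  toFun c := fun i => negfun c ↑i
  map_add' c d := by funext i; simp only [negfun, Pi.add_apply]; split_ifs <;> simp
  map_smul' r c := by funext i; simp only [negfun, Pi.smul_apply, smul_eq_mul,
    RingHom.id_apply]; split_ifs <;> simp

/-- the function underlying the positive-definite subspace -/
def posfun {k : ℕ} (c : Fin k → ℝ) : ℕ → ℝ := fun i =>
  if i = 0 then -3 * cext c 0 else if i = 1 then 5 * cext c 0
  else if i = 2 then 7 * cext c 0 else cext c (i - 2)

def Tpos (n : ℕ) : (Fin (2*n+2) → ℝ) →ₗ[ℝ] (Fin (2*n+4) → ℝ) where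
  toFun c := fun i => posfun c ↑i
  map_add' c d := by
    funext i; simp only [posfun, cext_add, Pi.add_apply]; split_ifs <;> ring
  map_smul' r c := by
    funext i; simp only [posfun, cext_smul, Pi.smul_apply, smul_eq_mul, RingHom.id_apply]
    split_ifs <;> ring

lemma Tneg_neg (n : ℕ) (c : Fin 2 → ℝ) (hc : c ≠ 0) :
    dotProduct (Tneg n c) ((Vmat n + (Vmat n)ᵀ) *ᵥ (Tneg n c)) < 0 := by
  have hz : ∀ j, 2*n+4 ≤ j → negfun c j = 0 := by
    intro j hj; simp only [negfun]; rw [if_neg (by omega), if_neg (by omega)]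
  have hQ := quadQ n (negfun c) hz
  have hTc : Tneg n c = fun i : Fin (2*n+4) => negfun c ↑i := rfl
  rw [hTc, hQ]
  have hzero : ∑ i ∈ Finset.Ico 3 (2*n+4), negfun c i * (negfun c i - negfun c (i+1)) = 0 := by
    apply Finset.sum_eq_zero
    intro i hi
    rw [Finset.mem_Ico] at hi
    have : negfun c i = 0 := by simp only [negfun]; rw [if_neg (by omega), if_neg (by omega)]
    rw [this, zero_mul]
  rw [hzero]
  have e0 : negfun c 0 = c 0 := by simp [negfun]
  have e1 : negfun c 1 = c 1 := by simp [negfun]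
  have e2 : negfun c 2 = 0 := by simp [negfun]
  have e3 : negfun c 3 = 0 := by simp [negfun]
  rw [e0, e1, e2, e3]
  have hne : c 0 ≠ 0 ∨ c 1 ≠ 0 := by
    by_contra h
    push_neg at h
    exact hc (funext fun i => by fin_cases i <;> simp [h.1, h.2])
  rcases hne with h | h
  · nlinarith [sq_nonneg (c 0 + c 1), sq_nonneg (c 1), mul_self_pos.mpr h]
  · nlinarith [sq_nonneg (c 0 + c 1), sq_nonneg (c 0), mul_self_pos.mpr h]

lemma Tpos_pos (n : ℕ) (c : Fin (2*n+2) → ℝ) (hc : c ≠ 0) :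
    0 < dotProduct (Tpos n c) ((Vmat n + (Vmat n)ᵀ) *ᵥ (Tpos n c)) := by
  set w : ℕ → ℝ := cext c with hw
  have hz : ∀ j, 2*n+4 ≤ j → posfun c j = 0 := by
    intro j hj
    simp only [posfun]
    rw [if_neg (by omega), if_neg (by omega), if_neg (by omega)]
    exact cext_zero_of_le c (by omega)
  have hQ := quadQ n (posfun c) hz
  have hTc : Tpos n c = fun i : Fin (2*n+4) => posfun c ↑i := rfl
  rw [hTc, hQ]
  have e0 : posfun c 0 = -3 * w 0 := by simp [posfun, hw]
  have e1 : posfun c 1 = 5 * w 0 := by simp [posfun, hw]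
  have e2 : posfun c 2 = 7 * w 0 := by simp [posfun, hw]
  have e3 : posfun c 3 = w 1 := by simp [posfun, hw]
  -- rewrite the Ico sum in terms of w
  have etail : ∑ i ∈ Finset.Ico 3 (2*n+4), posfun c i * (posfun c i - posfun c (i+1))
      = ∑ j ∈ Finset.Ico 1 (2*n+2), w j * (w j - w (j+1)) := by
    have h1 : ∀ i ∈ Finset.Ico 3 (2*n+4),
        posfun c i * (posfun c i - posfun c (i+1)) = w (i-2) * (w (i-2) - w (i-1)) := by
      intro i hi
      rw [Finset.mem_Ico] at hi
      have hp1 : posfun c i = w (i-2) := by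
        simp only [posfun]
        rw [if_neg (by omega), if_neg (by omega), if_neg (by omega)]
      have hp2 : posfun c (i+1) = w (i-1) := by
        simp only [posfun]
        rw [if_neg (by omega), if_neg (by omega), if_neg (by omega),
          show i + 1 - 2 = i - 1 by omega]
      rw [hp1, hp2]
    rw [Finset.sum_congr rfl h1, Finset.sum_Ico_eq_sum_range, Finset.sum_Ico_eq_sum_range]
    refine Finset.sum_congr (by congr 1 <;> omega) fun i hi => ?_
    rw [show 3 + i - 2 = 1 + i by omega, show 3 + i - 1 = 1 + i + 1 by omega]
  rw [e0, e1, e2, e3, etail]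
  -- sum manipulations
  set P := ∑ j ∈ Finset.Ico 1 (2*n+2), (w j)^2 with hP
  set R := ∑ j ∈ Finset.Ico 1 (2*n+2), w j * w (j+1) with hR
  set D := ∑ j ∈ Finset.Ico 1 (2*n+2), (w j - w (j+1))^2 with hD
  have hT : ∑ j ∈ Finset.Ico 1 (2*n+2), w j * (w j - w (j+1)) = P - R := by
    rw [hP, hR, ← Finset.sum_sub_distrib]
    exact Finset.sum_congr rfl fun j _ => by ring
  have hshift : ∑ j ∈ Finset.Ico 1 (2*n+2), (w (j+1))^2
      = ∑ j ∈ Finset.Ico 2 (2*n+3), (w j)^2 := by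
    rw [Finset.sum_Ico_eq_sum_range, Finset.sum_Ico_eq_sum_range]
    refine Finset.sum_congr (by congr 1 <;> omega) fun i hi => ?_
    rw [show 1 + i + 1 = 2 + i by omega]
  have htop : ∑ j ∈ Finset.Ico 2 (2*n+3), (w j)^2 = ∑ j ∈ Finset.Ico 2 (2*n+2), (w j)^2 := by
    rw [show 2*n+3 = (2*n+2)+1 by omega, Finset.sum_Ico_succ_top (by omega)]
    have hwtop : w (2*n+2) = 0 := by rw [hw]; exact cext_zero_of_le c le_rfl
    rw [hwtop]
    norm_num
  have hbot : P = (w 1)^2 + ∑ j ∈ Finset.Ico 2 (2*n+2), (w j)^2 := by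
    rw [hP, Finset.sum_eq_sum_Ico_succ_bot (by omega)]
  have hDsplit : D = P + (∑ j ∈ Finset.Ico 1 (2*n+2), (w (j+1))^2) - 2 * R := by
    rw [hD, hP, hR, Finset.mul_sum, ← Finset.sum_add_distrib, ← Finset.sum_sub_distrib]
    exact Finset.sum_congr rfl fun j _ => by ring
  have hDval : D = 2 * P - (w 1)^2 - 2 * R := by
    rw [hDsplit, hshift, htop]
    rw [hbot]; ring
  -- the SOS identity
  have hSOS : 2 * (-3 * w 0 * (-2*(-3 * w 0) - 7 * w 0) + 5 * w 0 * (-(-3 * w 0) - 5 * w 0)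
      + 7 * w 0 * (5 * w 0 - w 1) + (P - R))
      = 7 * (w 0)^2 + (7 * w 0 - w 1)^2 + D := by
    rw [hDval]; ring
  rw [hT, hSOS]
  -- positivity
  have hDnn : 0 ≤ D := Finset.sum_nonneg fun j _ => sq_nonneg _
  by_contra hcon
  push_neg at hcon
  have h0 : w 0 = 0 := by
    have hsq : (w 0)^2 ≤ 0 := by nlinarith [sq_nonneg (7 * w 0 - w 1)]
    exact sq_eq_zero_iff.mp (le_antisymm hsq (sq_nonneg _))
  have h1 : w 1 = 0 := by
    have hsq : (7 * w 0 - w 1)^2 ≤ 0 := by nlinarith [sq_nonneg (w 0)]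
    have := sq_eq_zero_iff.mp (le_antisymm hsq (sq_nonneg _))
    rw [h0] at this; linarith
  have hD0 : ∑ j ∈ Finset.Ico 1 (2*n+2), (w j - w (j+1))^2 = 0 := by
    have : D ≤ 0 := by nlinarith [sq_nonneg (w 0), sq_nonneg (7 * w 0 - w 1)]
    rw [hD] at this hDnn
    linarith
  have hchain := (Finset.sum_eq_zero_iff_of_nonneg (fun j _ => sq_nonneg (w j - w (j+1)))).mp hD0
  have hwz : ∀ j, w j = 0 := by
    intro j
    induction j using Nat.strong_induction_on with
    | _ j ih =>
      match j, ih with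
      | 0, _ => exact h0
      | 1, _ => exact h1
      | (k+2), ih =>
        by_cases hk : k+2 < 2*n+2
        · have hmem : (k+1) ∈ Finset.Ico 1 (2*n+2) := Finset.mem_Ico.mpr ⟨by omega, by omega⟩
          have hc2 := sq_eq_zero_iff.mp (hchain (k+1) hmem)
          have hprev := ih (k+1) (by omega)
          have hstep : w (k+1+1) = w (k+1) := by linarith
          rw [show k+2 = k+1+1 from rfl, hstep, hprev]
        · rw [hw]; exact cext_zero_of_le c (by omega)
  refine hc (funext fun i => ?_)
  have : w ↑i = c i := by
    rw [hw]
    simp only [cext]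
    rw [dif_pos i.isLt]
  rw [← this, hwz]; simp

end General

/-- The signature of Γ = Vₙ + Vₙᵀ equals 2n. -/
theorem stmt9 (n : ℕ) (hn : 1 ≤ n) :
    matSig (Vmat n + (Vmat n).transpose) = 2 * n := by
  set A := Vmat n + (Vmat n).transpose with hAdef
  have hA : A.IsHermitian := by
    rw [Matrix.IsHermitian]
    ext i j
    simp only [hAdef, Matrix.conjTranspose_apply, Matrix.add_apply, Matrix.transpose_apply,
      Vmat, star_trivial]
    ring
  have hroots := roots_herm hA
  set Npos := (Finset.univ.filter fun i => 0 < hA.eigenvalues i).card with hNpos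
  set Nneg := (Finset.univ.filter fun i => hA.eigenvalues i < 0).card with hNneg
  have hcpos : (A.charpoly.roots.countP (fun x => 0 < x)) = Npos := by
    rw [hroots, Multiset.countP_map]
    rfl
  have hcneg : (A.charpoly.roots.countP (fun x => x < 0)) = Nneg := by
    rw [hroots, Multiset.countP_map]
    rfl
  have hposle : 2*n+2 ≤ Npos := count_pos_le hA (Tpos n) (Tpos_pos n)
  have hnegle : 2 ≤ Nneg := count_neg_le hA (Tneg n) (Tneg_neg n)
  have hsum : Npos + Nneg ≤ 2*n+4 := by
    have hdisj : Disjoint (Finset.univ.filter fun i => 0 < hA.eigenvalues i)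
        (Finset.univ.filter fun i => hA.eigenvalues i < 0) := by
      rw [Finset.disjoint_left]
      intro i h1 h2
      rw [Finset.mem_filter] at h1 h2
      linarith [h1.2, h2.2]
    calc Npos + Nneg
        = ((Finset.univ.filter fun i => 0 < hA.eigenvalues i)
            ∪ (Finset.univ.filter fun i => hA.eigenvalues i < 0)).card :=
          (Finset.card_union_of_disjoint hdisj).symm
      _ ≤ (Finset.univ : Finset (Fin (2*n+4))).card := Finset.card_le_card (Finset.subset_univ _)
      _ = 2*n+4 := by simp
  have hNposval : Npos = 2*n+2 := by omega
  have hNnegval : Nneg = 2 := by omega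
  rw [matSig, hcpos, hcneg, hNposval, hNnegval]
  push_cast
  ring
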